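/- Let d ≥ 1. There exists a constant C (depending only on d) such that for all f₁,…,f_{d+1} ∈ ℓ²(ℤ): ‖T*(f₁,…,f_{d+1})‖_{ℓ²(ℤ)} ≤ C ∏_{j=1}^{d+1} ‖f_j‖_{ℓ²(ℤ)}, where T*(f₁,…,f_{d+1})(n) = sup_{N ∈ ℕ} |A_N(f₁,…,f_{d+1})(n)| and A_N(f₁,…,f_{d+1})(n) = (1/N^d) ∑_{m₁=1}^{N} ⋯ ∑_{m_d=1}^{N} f₁(n−m₁)⋯f_d(n−m_d) f_{d+1}(n−(m₁²+⋯+m_d²)). -/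

import Mathlib

open MeasureTheory Complex Real
open scoped Classical

/-- The multilinear average
`A_N(f₁,…,f_{d+1})(n)
  = (1/N^d) ∑_{m₁=1}^{N} ⋯ ∑_{m_d=1}^{N}
      f₁(n-m₁)⋯f_d(n-m_d) f_{d+1}(n-(m₁²+⋯+m_d²))`. -/
noncomputable def AveN (d N : ℕ) (f : Fin (d + 1) → ℤ → ℂ) (n : ℤ) : ℂ :=
  ((((N : ℝ) ^ d)⁻¹ : ℝ) : ℂ) *
    ∑ m ∈ Finset.Icc (fun _ : Fin d => 1) (fun _ => N),
      (∏ j, f j.castSucc (n - (m j : ℤ))) * f (Fin.last d) (n - ∑ j, ((m j : ℤ)) ^ 2)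

open scoped ENNReal NNReal

/-- Factorization of a tsum over a finite product of copies of `ℕ`. -/
lemma tsum_pi_prod : ∀ (d : ℕ) (g : Fin d → ℕ → ℝ≥0∞),
    ∑' m : Fin d → ℕ, ∏ j, g j (m j) = ∏ j, ∑' k, g j k := by
  intro d
  induction d with
  | zero =>
    intro g
    rw [tsum_eq_single (fun _ => 0) (fun b hb => absurd (Subsingleton.elim b _) hb)]
    simp [Finset.univ_eq_empty]
  | succ d ih =>
    intro g
    rw [← (Fin.consEquiv (fun _ => ℕ)).tsum_eq, ENNReal.tsum_prod']
    have h : ∀ (k : ℕ) (m : Fin d → ℕ),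
        ∏ j, g j ((Fin.consEquiv (fun _ => ℕ)) (k, m) j)
          = g 0 k * ∏ j : Fin d, g j.succ (m j) := by
      intro k m
      rw [Fin.prod_univ_succ]
      rfl
    simp_rw [h]
    simp_rw [ENNReal.tsum_mul_left, ENNReal.tsum_mul_right, ih, Fin.prod_univ_succ]

/-- The weight `1/k` (with value `0` at `k = 0`). -/
noncomputable def wt (k : ℕ) : ℝ≥0∞ := if k = 0 then 0 else ((k : ℝ≥0∞))⁻¹

lemma wt_ge (k N : ℕ) (h1 : 1 ≤ k) (h2 : k ≤ N) : ((N : ℝ≥0∞))⁻¹ ≤ wt k := by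
  rw [wt, if_neg (by omega)]
  exact ENNReal.inv_le_inv.mpr (by exact_mod_cast Nat.cast_le.mpr h2)

lemma wt_sq_ne_top : ∑' k : ℕ, wt k ^ 2 ≠ ⊤ := by
  have hs : Summable (fun k : ℕ => ((k:ℝ)⁻¹) ^ 2) := by
    have := Real.summable_one_div_nat_pow.mpr (le_refl 2)
    simpa [one_div] using this
  have heq : ∀ k : ℕ, wt k ^ 2 = ENNReal.ofReal (((k:ℝ)⁻¹) ^ 2) := by
    intro k
    cases k with
    | zero => simp [wt]
    | succ k =>
      rw [wt, if_neg (Nat.succ_ne_zero k), ENNReal.ofReal_pow (by positivity)]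
      congr 1
      rw [ENNReal.ofReal_inv_of_pos (by positivity)]
      norm_num
      rw [ENNReal.ofReal_add (by positivity) zero_le_one]
      simp [ENNReal.ofReal_natCast]
  calc ∑' k : ℕ, wt k ^ 2 = ∑' k : ℕ, ENNReal.ofReal (((k:ℝ)⁻¹) ^ 2) := tsum_congr heq
    _ = ENNReal.ofReal (∑' k : ℕ, ((k:ℝ)⁻¹) ^ 2) :=
        (ENNReal.ofReal_tsum_of_nonneg (fun k => by positivity) hs).symm
    _ ≠ ⊤ := ENNReal.ofReal_ne_top

/-- The dominating function. -/
noncomputable def Gfun (d : ℕ) (f : Fin (d+1) → ℤ → ℂ) (n : ℤ) : ℝ≥0∞ :=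
  ∑' m : Fin d → ℕ,
    (∏ j, wt (m j) * (‖f j.castSucc (n - (m j : ℤ))‖₊ : ℝ≥0∞)) *
      (‖f (Fin.last d) (n - ∑ j, ((m j : ℤ))^2)‖₊ : ℝ≥0∞)

lemma ptwise (d : ℕ) (hd : 1 ≤ d) (N : ℕ) (f : Fin (d+1) → ℤ → ℂ) (n : ℤ) :
    (‖AveN d N f n‖₊ : ℝ≥0∞) ≤ Gfun d f n := by
  rcases Nat.eq_zero_or_pos N with hN | hN
  · subst hN
    have : Finset.Icc (fun _ : Fin d => 1) (fun _ : Fin d => (0:ℕ)) = ∅ := by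
      apply Finset.Icc_eq_empty
      intro h
      exact absurd (h ⟨0, hd⟩) (by norm_num)
    simp [AveN, this]
  · have hc : (‖(((((N : ℝ) ^ d)⁻¹ : ℝ)) : ℂ)‖₊ : ℝ≥0∞) = (((N:ℝ≥0∞)) ^ d)⁻¹ := by
      rw [Complex.nnnorm_real]
      rw [← enorm_eq_nnnorm, Real.enorm_eq_ofReal (by positivity)]
      rw [ENNReal.ofReal_inv_of_pos (by positivity), ENNReal.ofReal_pow (by positivity)]
      simp
    calc (‖AveN d N f n‖₊ : ℝ≥0∞)
        = (‖(((((N : ℝ) ^ d)⁻¹ : ℝ)) : ℂ)‖₊ : ℝ≥0∞) *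
            (‖∑ m ∈ Finset.Icc (fun _ : Fin d => 1) (fun _ => N),
              (∏ j, f j.castSucc (n - (m j : ℤ))) * f (Fin.last d) (n - ∑ j, ((m j : ℤ)) ^ 2)‖₊ : ℝ≥0∞) := by
          rw [AveN]; rw [nnnorm_mul]; push_cast; ring
      _ ≤ (((N:ℝ≥0∞)) ^ d)⁻¹ * ∑ m ∈ Finset.Icc (fun _ : Fin d => 1) (fun _ => N),
            (∏ j, (‖f j.castSucc (n - (m j : ℤ))‖₊ : ℝ≥0∞)) *
              (‖f (Fin.last d) (n - ∑ j, ((m j : ℤ)) ^ 2)‖₊ : ℝ≥0∞) := by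
          rw [hc]
          refine mul_le_mul_right ?_ _
          refine le_trans (ENNReal.coe_le_coe.mpr (nnnorm_sum_le _ _)) ?_
          rw [ENNReal.coe_finset_sum]
          refine Finset.sum_le_sum fun m _ => ?_
          rw [nnnorm_mul, nnnorm_prod]
          push_cast
          exact le_rfl
      _ ≤ ∑ m ∈ Finset.Icc (fun _ : Fin d => 1) (fun _ => N),
            (∏ j, wt (m j) * (‖f j.castSucc (n - (m j : ℤ))‖₊ : ℝ≥0∞)) *
              (‖f (Fin.last d) (n - ∑ j, ((m j : ℤ))^2)‖₊ : ℝ≥0∞) := by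
          rw [Finset.mul_sum]
          refine Finset.sum_le_sum fun m hm => ?_
          rw [Finset.mem_Icc] at hm
          rw [← mul_assoc]
          refine mul_le_mul_left ?_ _
          have h2 : ((((N:ℝ≥0∞)) ^ d)⁻¹) = ∏ j : Fin d, ((N:ℝ≥0∞))⁻¹ := by
            rw [Finset.prod_const, Finset.card_univ, Fintype.card_fin, ENNReal.inv_pow]
          rw [h2, ← Finset.prod_mul_distrib]
          exact Finset.prod_le_prod' fun j _ =>
            mul_le_mul_left (wt_ge (m j) N (hm.1 j) (hm.2 j)) _
      _ ≤ Gfun d f n := ENNReal.sum_le_tsum _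

lemma eLpNorm_two_count {F : Type*} [NormedAddCommGroup F] {α : Type*} [MeasurableSpace α]
    [MeasurableSingletonClass α] (g : α → F) :
    eLpNorm g 2 (Measure.count : Measure α) = (∑' x, (‖g x‖₊ : ℝ≥0∞) ^ 2) ^ ((1:ℝ)/2) := by
  rw [eLpNorm_eq_lintegral_rpow_enorm_toReal (by norm_num) (by norm_num), lintegral_count]
  have h2 : ((2:ℝ≥0∞)).toReal = (2:ℝ) := by simp
  rw [h2]
  congr 1
  refine tsum_congr fun x => ?_
  rw [← ENNReal.rpow_natCast]
  norm_num
  rfl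

/-- Cauchy–Schwarz step. -/
lemma cs_step (d : ℕ) (f : Fin (d+1) → ℤ → ℂ) (n : ℤ) :
    Gfun d f n ^ 2 ≤
      (∑' m : Fin d → ℕ, ∏ j, (‖f j.castSucc (n - (m j : ℤ))‖₊ : ℝ≥0∞) ^ 2) *
      (∑' m : Fin d → ℕ, (∏ j, wt (m j) ^ 2) *
        (‖f (Fin.last d) (n - ∑ j, ((m j : ℤ))^2)‖₊ : ℝ≥0∞) ^ 2) := by
  set a : (Fin d → ℕ) → ℝ≥0∞ :=
    fun m => ∏ j, (‖f j.castSucc (n - (m j : ℤ))‖₊ : ℝ≥0∞) with ha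
  set b : (Fin d → ℕ) → ℝ≥0∞ :=
    fun m => (∏ j, wt (m j)) * (‖f (Fin.last d) (n - ∑ j, ((m j : ℤ))^2)‖₊ : ℝ≥0∞) with hb
  have hG : Gfun d f n = ∑' m, (a * b) m := by
    refine tsum_congr fun m => ?_
    simp only [ha, hb, Pi.mul_apply]
    rw [Finset.prod_mul_distrib]
    ring
  have hCS := ENNReal.lintegral_mul_le_Lp_mul_Lq (Measure.count : Measure (Fin d → ℕ))
    (Real.HolderConjugate.two_two : Real.HolderConjugate 2 2)
    (measurable_of_countable a).aemeasurable (measurable_of_countable b).aemeasurable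
  rw [lintegral_count, lintegral_count, lintegral_count] at hCS
  have key : Gfun d f n ^ 2 ≤
      ((∑' m, a m ^ (2:ℝ)) ^ ((1:ℝ)/2) * (∑' m, b m ^ (2:ℝ)) ^ ((1:ℝ)/2)) ^ 2 := by
    rw [hG]
    exact pow_le_pow_left₀ zero_le hCS 2
  refine le_trans key (le_of_eq ?_)
  rw [mul_pow, ← ENNReal.rpow_natCast (_ ^ ((1:ℝ)/2)) 2, ← ENNReal.rpow_natCast (_ ^ ((1:ℝ)/2)) 2,
    ← ENNReal.rpow_mul, ← ENNReal.rpow_mul]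
  norm_num
  congr 1
  · refine tsum_congr fun m => ?_
    rw [← ENNReal.rpow_natCast (a m) 2]
    norm_num
    rw [ha]
    simp only []
    rw [← Finset.prod_pow]
  · refine tsum_congr fun m => ?_
    rw [← ENNReal.rpow_natCast (b m) 2]
    norm_num
    rw [hb]
    simp only []
    rw [mul_pow, ← Finset.prod_pow]

theorem stmt17 (d : ℕ) (hd : 1 ≤ d) :
    ∃ C : ℝ, 0 < C ∧
      ∀ f : Fin (d + 1) → ℤ → ℂ, (∀ j, MemLp (f j) 2 (Measure.count : Measure ℤ)) →
        eLpNorm (fun n : ℤ => ⨆ N : ℕ, ‖AveN d N f n‖) 2 (Measure.count : Measure ℤ)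
          ≤ ENNReal.ofReal
              (C * ∏ j, (eLpNorm (f j) 2 (Measure.count : Measure ℤ)).toReal) := by
  classical
  set K : ℝ≥0∞ := ∑' k : ℕ, wt k ^ 2 with hKdef
  have hKtop : K ≠ ⊤ := wt_sq_ne_top
  refine ⟨(K.toReal + 1) ^ d, by positivity, ?_⟩
  intro f hf
  set S : Fin (d+1) → ℝ≥0∞ := fun j => ∑' x : ℤ, (‖f j x‖₊ : ℝ≥0∞) ^ 2 with hSdef
  have hT : ∀ j, eLpNorm (f j) 2 (Measure.count : Measure ℤ) = S j ^ ((1:ℝ)/2) :=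
    fun j => eLpNorm_two_count (f j)
  have hTtop : ∀ j, eLpNorm (f j) 2 (Measure.count : Measure ℤ) ≠ ⊤ :=
    fun j => (hf j).eLpNorm_ne_top
  -- pointwise bound on the sup
  have hsup : ∀ n : ℤ, (‖⨆ N : ℕ, ‖AveN d N f n‖‖₊ : ℝ≥0∞) ≤ Gfun d f n := by
    intro n
    have hnn : 0 ≤ ⨆ N : ℕ, ‖AveN d N f n‖ := Real.iSup_nonneg fun N => norm_nonneg _
    rw [← enorm_eq_nnnorm, Real.enorm_eq_ofReal hnn]
    by_cases hG : Gfun d f n = ⊤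
    · rw [hG]; exact le_top
    · refine ENNReal.ofReal_le_of_le_toReal (Real.iSup_le (fun N => ?_) ENNReal.toReal_nonneg)
      have h1 := ptwise d hd N f n
      have h2 := ENNReal.toReal_mono hG h1
      simpa using h2
  -- bound on the square sum of G
  have hA : ∀ n : ℤ,
      (∑' m : Fin d → ℕ, ∏ j, (‖f j.castSucc (n - (m j : ℤ))‖₊ : ℝ≥0∞) ^ 2)
        ≤ ∏ j : Fin d, S j.castSucc := by
    intro n
    rw [tsum_pi_prod d (fun j k => (‖f j.castSucc (n - (k : ℤ))‖₊ : ℝ≥0∞) ^ 2)]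
    refine Finset.prod_le_prod' fun j _ => ?_
    have hinj : Function.Injective (fun k : ℕ => n - (k : ℤ)) := by
      intro x y h
      simp only [sub_right_inj] at h
      exact_mod_cast h
    exact ENNReal.tsum_comp_le_tsum_of_injective hinj
      (fun x => (‖f j.castSucc x‖₊ : ℝ≥0∞) ^ 2)
  have hB : (∑' n : ℤ, ∑' m : Fin d → ℕ, (∏ j, wt (m j) ^ 2) *
      (‖f (Fin.last d) (n - ∑ j, ((m j : ℤ))^2)‖₊ : ℝ≥0∞) ^ 2)
        = K ^ d * S (Fin.last d) := by
    rw [ENNReal.tsum_comm]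
    have hinner : ∀ m : Fin d → ℕ,
        (∑' n : ℤ, (∏ j, wt (m j) ^ 2) *
          (‖f (Fin.last d) (n - ∑ j, ((m j : ℤ))^2)‖₊ : ℝ≥0∞) ^ 2)
          = (∏ j, wt (m j) ^ 2) * S (Fin.last d) := by
      intro m
      rw [ENNReal.tsum_mul_left]
      congr 1
      exact (Equiv.subRight (∑ j, ((m j : ℤ))^2)).tsum_eq
        fun x => (‖f (Fin.last d) x‖₊ : ℝ≥0∞) ^ 2
    rw [tsum_congr hinner, ENNReal.tsum_mul_right]
    congr 1
    rw [tsum_pi_prod d (fun _ k => wt k ^ 2), Finset.prod_const, Finset.card_univ,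
      Fintype.card_fin]
  -- main chain
  have main : eLpNorm (fun n : ℤ => ⨆ N : ℕ, ‖AveN d N f n‖) 2 (Measure.count : Measure ℤ)
      ≤ (K ^ d * ∏ j, S j) ^ ((1:ℝ)/2) := by
    rw [eLpNorm_two_count]
    refine ENNReal.rpow_le_rpow ?_ (by norm_num)
    calc ∑' n : ℤ, (‖⨆ N : ℕ, ‖AveN d N f n‖‖₊ : ℝ≥0∞) ^ 2
        ≤ ∑' n : ℤ, Gfun d f n ^ 2 :=
          Summable.tsum_le_tsum (fun n => pow_le_pow_left₀ zero_le (hsup n) 2)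
            ENNReal.summable ENNReal.summable
      _ ≤ ∑' n : ℤ, (∏ j : Fin d, S j.castSucc) *
            (∑' m : Fin d → ℕ, (∏ j, wt (m j) ^ 2) *
              (‖f (Fin.last d) (n - ∑ j, ((m j : ℤ))^2)‖₊ : ℝ≥0∞) ^ 2) := by
          refine Summable.tsum_le_tsum (fun n => ?_) ENNReal.summable ENNReal.summable
          exact le_trans (cs_step d f n) (mul_le_mul_left (hA n) _)
      _ = (∏ j : Fin d, S j.castSucc) * (K ^ d * S (Fin.last d)) := by
          rw [ENNReal.tsum_mul_left, hB]
      _ = K ^ d * ∏ j, S j := by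
          rw [Fin.prod_univ_castSucc]
          ring
  refine le_trans main ?_
  -- final arithmetic
  have hKhalf : (K ^ d : ℝ≥0∞) ^ ((1:ℝ)/2) ≤ ENNReal.ofReal ((K.toReal + 1) ^ d) := by
    have h1 : (K ^ d : ℝ≥0∞) ^ ((1:ℝ)/2) = (K ^ ((1:ℝ)/2)) ^ d := by
      rw [← ENNReal.rpow_natCast K d, ← ENNReal.rpow_mul, mul_comm, ENNReal.rpow_mul,
        ENNReal.rpow_natCast]
    rw [h1, ENNReal.ofReal_pow (by positivity)]
    refine pow_le_pow_left₀ zero_le ?_ d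
    have h2 : K ^ ((1:ℝ)/2) ≤ max 1 K := by
      rcases le_total K 1 with h | h
      · exact le_trans (ENNReal.rpow_le_one h (by norm_num)) (le_max_left _ _)
      · refine le_trans ?_ (le_max_right _ _)
        calc K ^ ((1:ℝ)/2) ≤ K ^ (1:ℝ) :=
              ENNReal.rpow_le_rpow_of_exponent_le h (by norm_num)
          _ = K := ENNReal.rpow_one K
    refine le_trans h2 (max_le ?_ ?_)
    · rw [← ENNReal.ofReal_one]
      exact ENNReal.ofReal_le_ofReal (by linarith [ENNReal.toReal_nonneg (a := K)])
    · exact le_trans (le_of_eq (ENNReal.ofReal_toReal hKtop).symm)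
        (ENNReal.ofReal_le_ofReal (by linarith))
  have hprod : (∏ j, S j) ^ ((1:ℝ)/2) = ∏ j, eLpNorm (f j) 2 (Measure.count : Measure ℤ) := by
    rw [← ENNReal.prod_rpow_of_nonneg (by norm_num : (0:ℝ) ≤ 1/2)]
    exact Finset.prod_congr rfl fun j _ => (hT j).symm
  have hP : (∏ j, eLpNorm (f j) 2 (Measure.count : Measure ℤ))
      = ENNReal.ofReal (∏ j, (eLpNorm (f j) 2 (Measure.count : Measure ℤ)).toReal) := by
    rw [← ENNReal.toReal_prod, ENNReal.ofReal_toReal]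
    exact ENNReal.prod_ne_top fun j _ => hTtop j
  calc (K ^ d * ∏ j, S j) ^ ((1:ℝ)/2)
      = (K ^ d) ^ ((1:ℝ)/2) * (∏ j, S j) ^ ((1:ℝ)/2) :=
        ENNReal.mul_rpow_of_nonneg _ _ (by norm_num)
    _ ≤ ENNReal.ofReal ((K.toReal + 1) ^ d) *
        ENNReal.ofReal (∏ j, (eLpNorm (f j) 2 (Measure.count : Measure ℤ)).toReal) := by
        rw [hprod, hP]
        exact mul_le_mul_left hKhalf _
    _ = ENNReal.ofReal ((K.toReal + 1) ^ d *
        ∏ j, (eLpNorm (f j) 2 (Measure.count : Measure ℤ)).toReal) :=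
        (ENNReal.ofReal_mul (by positivity)).symm
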